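/- Let A be a finite alphabet. If Z and Z' are strong alt-induced codes over A that are both subinfix codes, then the product ZZ' is a strong alt-induced code that is a subinfix code. -/

import Mathlib

/-- `X` is a code: every word has at most one factorization into words of `X`. -/
def IsCode {A : Type} (X : Language A) : Prop :=
  ∀ l m : List (List A), (∀ u ∈ l, u ∈ X) → (∀ u ∈ m, u ∈ X) →
    l.flatten = m.flatten → l = m

/-- `l` is an alternative factorization of `w` on `(X, Y)`. -/
def IsAltFact {A : Type} (X Y : Language A) (l : List (List A)) (w : List A) : Prop :=
  2 ≤ l.length ∧ l.flatten = w ∧ (∀ u ∈ l, u ∈ X ∨ u ∈ Y) ∧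
    l.Chain' (fun u v => (u ∈ X → v ∈ Y) ∧ (u ∈ Y → v ∈ X))

/-- Two alternative factorizations are similar: they both begin with words in the same
set (`X` or `Y`), and likewise both end with words in the same set. -/
def SimilarFacts {A : Type} (X Y : Language A) (l l' : List (List A)) : Prop :=
  ((l.headI ∈ X ∧ l'.headI ∈ X) ∨ (l.headI ∈ Y ∧ l'.headI ∈ Y)) ∧
  ((l.getLastI ∈ X ∧ l'.getLastI ∈ X) ∨ (l.getLastI ∈ Y ∧ l'.getLastI ∈ Y))

/-- `(X, Y)` is an alternative code: `X`, `Y` are nonempty subsets of `A⁺` and no word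
of `A⁺` admits two different similar alternative factorizations on `(X, Y)`. -/
def IsAltCode {A : Type} (X Y : Language A) : Prop :=
  X.Nonempty ∧ Y.Nonempty ∧ [] ∉ X ∧ [] ∉ Y ∧
  ∀ w : List A, w ≠ [] → ∀ l l' : List (List A),
    IsAltFact X Y l w → IsAltFact X Y l' w → SimilarFacts X Y l l' → l = l'

/-- `(X, Y)` is a strong alternative code: an alternative code with
`X⁻¹(XY) ⊆ Y` and `(XY)Y⁻¹ ⊆ X`. -/
def IsStrongAltCode {A : Type} (X Y : Language A) : Prop :=
  IsAltCode X Y ∧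
  {u : List A | ∃ x ∈ X, x ++ u ∈ X * Y} ⊆ Y ∧
  {u : List A | ∃ y ∈ Y, u ++ y ∈ X * Y} ⊆ X

/-- `Z` is a strong alt-induced code: `Z = XY` for some strong alternative code `(X, Y)`. -/
def IsStrongAltInduced {A : Type} (Z : Language A) : Prop :=
  ∃ X Y : Language A, IsStrongAltCode X Y ∧ Z = X * Y

/-- Prefix code: no word is a proper prefix of another word of `X`. -/
def IsPrefixCode {A : Type} (X : Language A) : Prop :=
  ∀ u ∈ X, ∀ v ∈ X, u <+: v → u = v

/-- Suffix code: no word is a proper suffix of another word of `X`. -/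
def IsSuffixCode {A : Type} (X : Language A) : Prop :=
  ∀ u ∈ X, ∀ v ∈ X, u <:+ v → u = v

/-- Bifix code: both a prefix code and a suffix code. -/
def IsBifixCode {A : Type} (X : Language A) : Prop :=
  IsPrefixCode X ∧ IsSuffixCode X

/-- p-infix code: no word in `X` is an infix of a proper prefix of another word in `X`. -/
def IsPInfixCode {A : Type} (X : Language A) : Prop :=
  ∀ u ∈ X, ∀ v ∈ X, u ≠ v → ∀ p : List A, p <+: v → p ≠ v → ¬ u <:+: p

/-- s-infix code: no word in `X` is an infix of a proper suffix of another word in `X`. -/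
def IsSInfixCode {A : Type} (X : Language A) : Prop :=
  ∀ u ∈ X, ∀ v ∈ X, u ≠ v → ∀ p : List A, p <:+ v → p ≠ v → ¬ u <:+: p

/-- Infix code: no word in `X` is an infix of a proper infix of another word in `X`. -/
def IsInfixCode {A : Type} (X : Language A) : Prop :=
  ∀ u ∈ X, ∀ v ∈ X, u ≠ v → ∀ p : List A, p <:+: v → p ≠ v → ¬ u <:+: p

/-- p-subinfix code: no word in `X` is a subword of a proper prefix of another word in `X`. -/
def IsPSubinfixCode {A : Type} (X : Language A) : Prop :=
  ∀ u ∈ X, ∀ v ∈ X, u ≠ v → ∀ p : List A, p <+: v → p ≠ v → ¬ List.Sublist u p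

/-- s-subinfix code: no word in `X` is a subword of a proper suffix of another word in `X`. -/
def IsSSubinfixCode {A : Type} (X : Language A) : Prop :=
  ∀ u ∈ X, ∀ v ∈ X, u ≠ v → ∀ p : List A, p <:+ v → p ≠ v → ¬ List.Sublist u p

/-- Subinfix code: no word in `X` is a subword of a proper infix of another word in `X`. -/
def IsSubinfixCode {A : Type} (X : Language A) : Prop :=
  ∀ u ∈ X, ∀ v ∈ X, u ≠ v → ∀ p : List A, p <:+: v → p ≠ v → ¬ List.Sublist u p

/-- Hypercode: no word in `X` is a proper subword of another word in `X`. -/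
def IsHypercode {A : Type} (X : Language A) : Prop :=
  ∀ u ∈ X, ∀ v ∈ X, List.Sublist u v → u = v

/-- Maximal prefix code: a prefix code not properly contained in any prefix code over `A`
(i.e. any nonempty subset of `A⁺` that is a prefix code). -/
def IsMaxPrefixCode {A : Type} (X : Language A) : Prop :=
  IsPrefixCode X ∧ ∀ X' : Language A, [] ∉ X' → IsPrefixCode X' → X ≤ X' → X' ≤ X

/-- Maximal suffix code. -/
def IsMaxSuffixCode {A : Type} (X : Language A) : Prop :=
  IsSuffixCode X ∧ ∀ X' : Language A, [] ∉ X' → IsSuffixCode X' → X ≤ X' → X' ≤ X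

/-- Maximal bifix code. -/
def IsMaxBifixCode {A : Type} (X : Language A) : Prop :=
  IsBifixCode X ∧ ∀ X' : Language A, [] ∉ X' → IsBifixCode X' → X ≤ X' → X' ≤ X

/-- `X` is thin: some word is not an infix of any word of `X`. -/
def IsThin {A : Type} (X : Language A) : Prop :=
  ∃ w : List A, ∀ x ∈ X, ¬ w <:+: x

namespace StrongAltAux

variable {A : Type}

lemma suffix_of_suffix_length_le' {l₁ l₂ l₃ : List A} (h₁ : l₁ <:+ l₃) (h₂ : l₂ <:+ l₃)
    (h : l₁.length ≤ l₂.length) : l₁ <:+ l₂ := by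
  rw [← List.reverse_prefix] at h₁ h₂ ⊢
  exact List.prefix_of_prefix_length_le h₁ h₂ (by simpa using h)

lemma proper_infix_length {p v : List A} (hp : p <:+: v) (hne : p ≠ v) :
    p.length < v.length :=
  lt_of_le_of_ne hp.length_le fun e => hne (List.IsInfix.eq_of_length hp e)

lemma subinfix_not_sublist {X : Language A} (h : IsSubinfixCode X) {u v p : List A}
    (hu : u ∈ X) (hv : v ∈ X) (hp : p <:+: v) (hne : p ≠ v) : ¬ List.Sublist u p := by
  intro hs
  by_cases huv : u = v
  · subst huv
    exact absurd (lt_of_le_of_lt hs.length_le (proper_infix_length hp hne)) (lt_irrefl _)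
  · exact h u hu v hv huv p hp hne hs

lemma subinfix_prefixCode {X : Language A} (h : IsSubinfixCode X) : IsPrefixCode X := by
  intro u hu v hv hp
  by_contra hne
  exact subinfix_not_sublist h hu hv hp.isInfix hne (List.Sublist.refl u)

lemma subinfix_suffixCode {X : Language A} (h : IsSubinfixCode X) : IsSuffixCode X := by
  intro u hu v hv hp
  by_contra hne
  exact subinfix_not_sublist h hu hv hp.isInfix hne (List.Sublist.refl u)

lemma prefixCode_eq {X : Language A} (h : IsPrefixCode X) {u v w : List A}
    (hu : u ∈ X) (hv : v ∈ X) (h₁ : u <+: w) (h₂ : v <+: w) : u = v := by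
  rcases le_total u.length v.length with hl | hl
  · exact h u hu v hv (List.prefix_of_prefix_length_le h₁ h₂ hl)
  · exact (h v hv u hu (List.prefix_of_prefix_length_le h₂ h₁ hl)).symm

lemma suffixCode_eq {X : Language A} (h : IsSuffixCode X) {u v w : List A}
    (hu : u ∈ X) (hv : v ∈ X) (h₁ : u <:+ w) (h₂ : v <:+ w) : u = v := by
  rcases le_total u.length v.length with hl | hl
  · exact h u hu v hv (suffix_of_suffix_length_le' h₁ h₂ hl)
  · exact (h v hv u hu (suffix_of_suffix_length_le' h₂ h₁ hl)).symm

lemma uniq {Z Z' : Language A} (hZp : IsPrefixCode Z) (hZ'p : IsPrefixCode Z')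
    (hZe : [] ∉ Z) (hZ'e : [] ∉ Z') :
    ∀ l l' : List (List A),
      (∀ u ∈ l, u ∈ Z ∨ u ∈ Z') → (∀ u ∈ l', u ∈ Z ∨ u ∈ Z') →
      l.Chain' (fun u v => (u ∈ Z → v ∈ Z') ∧ (u ∈ Z' → v ∈ Z)) →
      l'.Chain' (fun u v => (u ∈ Z → v ∈ Z') ∧ (u ∈ Z' → v ∈ Z)) →
      l.flatten = l'.flatten →
      (l ≠ [] → l' ≠ [] →
        (l.headI ∈ Z ∧ l'.headI ∈ Z) ∨ (l.headI ∈ Z' ∧ l'.headI ∈ Z')) →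
      l = l' := by
  intro l
  induction l with
  | nil =>
    intro l' _ hm' _ _ hf _
    cases l' with
    | nil => rfl
    | cons u t =>
      exfalso
      have hu : u = [] := by
        have : ([] : List A) = u ++ t.flatten := by simpa using hf
        exact (List.append_eq_nil_iff.mp this.symm).1
      rcases hm' u (by simp) with h | h
      · exact hZe (hu ▸ h)
      · exact hZ'e (hu ▸ h)
  | cons u t ih =>
    intro l' hm hm' hc hc' hf hsim
    cases l' with
    | nil =>
      exfalso
      have hu : u = [] := by
        have : u ++ t.flatten = ([] : List A) := by simpa using hf
        exact (List.append_eq_nil_iff.mp this).1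
      rcases hm u (by simp) with h | h
      · exact hZe (hu ▸ h)
      · exact hZ'e (hu ▸ h)
    | cons u' t' =>
      have hs := hsim (by simp) (by simp)
      simp only [List.headI] at hs
      have hf' : u ++ t.flatten = u' ++ t'.flatten := by simpa using hf
      have huu' : u = u' := by
        have h₁ : u <+: u ++ t.flatten := ⟨t.flatten, rfl⟩
        have h₂ : u' <+: u ++ t.flatten := ⟨t'.flatten, hf'.symm⟩
        rcases hs with ⟨hu, hu'⟩ | ⟨hu, hu'⟩
        · exact prefixCode_eq hZp hu hu' h₁ h₂
        · exact prefixCode_eq hZ'p hu hu' h₁ h₂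
      subst huu'
      have hft : t.flatten = t'.flatten := List.append_cancel_left hf'
      have hsim' : t ≠ [] → t' ≠ [] →
          (t.headI ∈ Z ∧ t'.headI ∈ Z) ∨ (t.headI ∈ Z' ∧ t'.headI ∈ Z') := by
        intro ht ht'
        cases t with
        | nil => exact absurd rfl ht
        | cons v s =>
          cases t' with
          | nil => exact absurd rfl ht'
          | cons v' s' =>
            have hr : (u ∈ Z → v ∈ Z') ∧ (u ∈ Z' → v ∈ Z) := (List.isChain_cons_cons.mp hc).1
            have hr' : (u ∈ Z → v' ∈ Z') ∧ (u ∈ Z' → v' ∈ Z) := (List.isChain_cons_cons.mp hc').1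
            simp only [List.headI]
            rcases hs with ⟨hu, _⟩ | ⟨hu, _⟩
            · exact Or.inr ⟨hr.1 hu, hr'.1 hu⟩
            · exact Or.inl ⟨hr.2 hu, hr'.2 hu⟩
      have := ih t' (fun x hx => hm x (by simp [hx])) (fun x hx => hm' x (by simp [hx]))
        hc.tail hc'.tail hft hsim'
      rw [this]

end StrongAltAux

/-- the product of two subinfix strong alt-induced codes is a
subinfix strong alt-induced code. -/

theorem strongAltInduced_mul_subinfixCode {A : Type} [Fintype A] (Z Z' : Language A)
    (hZ : IsStrongAltInduced Z) (hZ' : IsStrongAltInduced Z')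
    (h1 : IsSubinfixCode Z) (h2 : IsSubinfixCode Z') :
    IsStrongAltInduced (Z * Z') ∧ IsSubinfixCode (Z * Z') := by
  obtain ⟨X, Y, ⟨⟨⟨x₀, hx₀⟩, ⟨y₀, hy₀⟩, hXe, _, _⟩, _, _⟩, hZeq⟩ := hZ
  obtain ⟨X', Y', ⟨⟨⟨x₁, hx₁⟩, ⟨y₁, hy₁⟩, hX'e, _, _⟩, _, _⟩, hZ'eq⟩ := hZ'
  have hZne : Z.Nonempty := ⟨x₀ ++ y₀, hZeq ▸ Language.append_mem_mul hx₀ hy₀⟩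
  have hZ'ne : Z'.Nonempty := ⟨x₁ ++ y₁, hZ'eq ▸ Language.append_mem_mul hx₁ hy₁⟩
  have hZeps : [] ∉ Z := by
    intro h
    rw [hZeq] at h
    obtain ⟨a, ha, b, hb, hab⟩ := Language.mem_mul.mp h
    exact hXe ((List.append_eq_nil_iff.mp hab).1 ▸ ha)
  have hZ'eps : [] ∉ Z' := by
    intro h
    rw [hZ'eq] at h
    obtain ⟨a, ha, b, hb, hab⟩ := Language.mem_mul.mp h
    exact hX'e ((List.append_eq_nil_iff.mp hab).1 ▸ ha)
  have hZpre : IsPrefixCode Z := StrongAltAux.subinfix_prefixCode h1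
  have hZ'pre : IsPrefixCode Z' := StrongAltAux.subinfix_prefixCode h2
  have hZsuf : IsSuffixCode Z := StrongAltAux.subinfix_suffixCode h1
  have hZ'suf : IsSuffixCode Z' := StrongAltAux.subinfix_suffixCode h2
  constructor
  · refine ⟨Z, Z', ⟨⟨hZne, hZ'ne, hZeps, hZ'eps, ?_⟩, ?_, ?_⟩, rfl⟩
    · intro w _ l l' hl hl' hsim
      exact StrongAltAux.uniq hZpre hZ'pre hZeps hZ'eps l l' hl.2.2.1 hl'.2.2.1
        hl.2.2.2 hl'.2.2.2 (hl.2.1.trans hl'.2.1.symm) (fun _ _ => hsim.1)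
    · rintro u ⟨x, hx, hxu⟩
      obtain ⟨a, ha, b, hb, hab⟩ := Language.mem_mul.mp hxu
      have hax : a = x := StrongAltAux.prefixCode_eq hZpre ha hx ⟨b, hab⟩ ⟨u, rfl⟩
      subst hax
      have hbu : b = u := List.append_cancel_left hab
      exact hbu ▸ hb
    · rintro u ⟨y, hy, huy⟩
      obtain ⟨a, ha, b, hb, hab⟩ := Language.mem_mul.mp huy
      have hby : b = y := StrongAltAux.suffixCode_eq hZ'suf hb hy ⟨a, hab⟩ ⟨u, rfl⟩
      subst hby
      have hau : a = u := List.append_cancel_right hab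
      exact hau ▸ ha
  · rintro u hu v hv huv p hpv hpne hsub
    obtain ⟨z₁, hz₁, w₁, hw₁, rfl⟩ := Language.mem_mul.mp hu
    obtain ⟨z₂, hz₂, w₂, hw₂, rfl⟩ := Language.mem_mul.mp hv
    obtain ⟨q₁, q₂, rfl, hq₁, hq₂⟩ := List.append_sublist_iff.mp hsub
    obtain ⟨a, b, hab⟩ := hpv
    have hlen : a.length + q₁.length + q₂.length + b.length = z₂.length + w₂.length := by
      have h := congrArg List.length hab
      simp only [List.length_append] at h
      omega
    by_cases hc : a.length + q₁.length ≤ z₂.length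
    · have hpre : a ++ q₁ <+: z₂ ++ w₂ := ⟨q₂ ++ b, by simpa [List.append_assoc] using hab⟩
      have hsub1 : a ++ q₁ <+: z₂ :=
        List.prefix_of_prefix_length_le hpre (List.prefix_append _ _)
          (by simpa [List.length_append] using hc)
      have hq1inf : q₁ <:+: z₂ := (List.suffix_append a q₁).isInfix.trans hsub1.isInfix
      by_cases hq1e : q₁ = z₂
      · have hal : a = [] := by
          have h := congrArg List.length hq1e
          have : a.length = 0 := by omega
          exact List.eq_nil_of_length_eq_zero this
        subst hal
        subst hq1e
        have hw : q₂ ++ b = w₂ := by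
          have h' : q₁ ++ (q₂ ++ b) = q₁ ++ w₂ := by simpa [List.append_assoc] using hab
          exact List.append_cancel_left h'
        have hq2pre : q₂ <+: w₂ := ⟨b, hw⟩
        have hq2ne : q₂ ≠ w₂ := fun h => hpne (by rw [h])
        exact StrongAltAux.subinfix_not_sublist h2 hw₁ hw₂ hq2pre.isInfix hq2ne hq₂
      · exact StrongAltAux.subinfix_not_sublist h1 hz₁ hz₂ hq1inf hq1e hq₁
    · push_neg at hc
      have hsuf : q₂ ++ b <:+ z₂ ++ w₂ := ⟨a ++ q₁, by simpa [List.append_assoc] using hab⟩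
      have hsub2 : q₂ ++ b <:+ w₂ :=
        StrongAltAux.suffix_of_suffix_length_le' hsuf (List.suffix_append _ _)
          (by simp only [List.length_append]; omega)
      have hq2inf : q₂ <:+: w₂ := (List.prefix_append q₂ b).isInfix.trans hsub2.isInfix
      have hq2ne : q₂ ≠ w₂ := by
        intro h
        have h2l := hsub2.length_le
        have h3 := congrArg List.length h
        simp only [List.length_append] at h2l
        omega
      exact StrongAltAux.subinfix_not_sublist h2 hw₁ hw₂ hq2inf hq2ne hq₂
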